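/- Let Δ(λ) be the discriminant of x^5 + λ₄x³ + λ₆x² + λ₈x + λ₁₀ and let ℓ₂ = 6λ₆∂_{λ₄} + (8λ₈ - (12/5)λ₄²)∂_{λ₆} + (10λ₁₀ - (8/5)λ₆λ₄)∂_{λ₈} - (4/5)λ₈λ₄∂_{λ₁₀}. Then ℓ₂Δ = 0, i.e. ℓ₂ annihilates the discriminant. -/

import Mathlib

/-- The discriminant of the quintic `x^5 + l4*x^3 + l6*x^2 + l8*x + l10`. -/
noncomputable def quinticDisc (l4 l6 l8 l10 : ℂ) : ℂ :=
  3125 * l10 ^ 4 - 3750 * l10 ^ 3 * l6 * l4 + 2000 * l10 ^ 2 * l8 ^ 2 * l4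
    + 2250 * l10 ^ 2 * l8 * l6 ^ 2 - 1600 * l10 * l8 ^ 3 * l6 + 256 * l8 ^ 5
    - 900 * l10 ^ 2 * l8 * l4 ^ 3 + 825 * l10 ^ 2 * l6 ^ 2 * l4 ^ 2
    + 560 * l10 * l8 ^ 2 * l6 * l4 ^ 2 - 630 * l10 * l8 * l6 ^ 3 * l4
    + 108 * l10 * l6 ^ 5 - 128 * l8 ^ 4 * l4 ^ 2 + 144 * l8 ^ 3 * l6 ^ 2 * l4
    - 27 * l8 ^ 2 * l6 ^ 4 + 108 * l10 ^ 2 * l4 ^ 5 - 72 * l10 * l8 * l6 * l4 ^ 4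
    + 16 * l10 * l6 ^ 3 * l4 ^ 3 + 16 * l8 ^ 3 * l4 ^ 4 - 4 * l8 ^ 2 * l6 ^ 2 * l4 ^ 3

lemma deriv_hmul_aux (c x : ℂ) : deriv (HMul.hMul c) x = c := by
  simpa using ((hasDerivAt_id x).const_mul c).deriv


set_option maxHeartbeats 4000000 in
/-- the Zakalyukin vector field
ℓ₂ = 6λ₆∂_{λ₄} + (8λ₈ - (12/5)λ₄²)∂_{λ₆} + (10λ₁₀ - (8/5)λ₆λ₄)∂_{λ₈} - (4/5)λ₈λ₄∂_{λ₁₀}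
annihilates the discriminant: ℓ₂Δ = 0. -/
theorem ell2_annihilates_disc (l4 l6 l8 l10 : ℂ) :
    6 * l6 * deriv (fun t => quinticDisc t l6 l8 l10) l4
      + (8 * l8 - 12 / 5 * l4 ^ 2) * deriv (fun t => quinticDisc l4 t l8 l10) l6
      + (10 * l10 - 8 / 5 * l6 * l4) * deriv (fun t => quinticDisc l4 l6 t l10) l8
      - 4 / 5 * l8 * l4 * deriv (fun t => quinticDisc l4 l6 l8 t) l10
    = 0 := by
  simp (disch := fun_prop) only [quinticDisc, deriv_fun_add, deriv_fun_sub, deriv_fun_mul,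
    deriv_pow_field, deriv_const', deriv_id'', deriv_hmul_aux]
  ring
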